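/- (Shading Lemma) Let (τ,R) be a mesh pattern of length k, let 1 ≤ i ≤ k with τ(i) = j, and suppose the box (i,j) is not in R. Assume: (1) the box (i−1,j−1) is not in R; (2) at most one of the boxes (i,j−1) and (i−1,j) is in R; (3) for every ℓ with ℓ ≠ i−1 and ℓ ≠ i, if (ℓ,j−1) ∈ R then (ℓ,j) ∈ R; (4) for every ℓ with ℓ ≠ j−1 and ℓ ≠ j, if (i−1,ℓ) ∈ R then (i,ℓ) ∈ R. Then the patterns (τ,R) and (τ, R ∪ {(i,j)}) are coincident: a permutation avoids (τ,R) if and only if it avoids (τ, R ∪ {(i,j)}). -/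

import Mathlib

/-- 1-based position boundaries of an occurrence: `posOf x 0 = 0`,
`posOf x i = x_i` (1-based) for `1 ≤ i ≤ k`, and `posOf x i = n+1` for `i > k`. -/
def posOf {k n : ℕ} (x : Fin k → Fin n) (i : ℕ) : ℕ :=
  if h : 1 ≤ i ∧ i ≤ k then (x ⟨i - 1, by omega⟩ : ℕ) + 1
  else if i = 0 then 0 else n + 1

/-- 1-based value boundaries of an occurrence: `valOf τ x π 0 = 0`,
`valOf τ x π j = y_j`, the `j`-th smallest of the values `π(x_1),…,π(x_k)`
(which equals `π(x_{τ⁻¹(j)})` for an occurrence of the classical pattern `τ`),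
and `n+1` for `j > k`. -/
def valOf {k n : ℕ} (τ : Equiv.Perm (Fin k)) (x : Fin k → Fin n)
    (π : Equiv.Perm (Fin n)) (j : ℕ) : ℕ :=
  if h : 1 ≤ j ∧ j ≤ k then (π (x (τ.symm ⟨j - 1, by omega⟩)) : ℕ) + 1
  else if j = 0 then 0 else n + 1

/-- `π` (a permutation of length `n`, 0-indexed via `Fin n`) contains the mesh
pattern `(τ, R)`, where boxes in `R` are given with 0-based coordinates in `[0,k]²`.
All positions/values are converted to 1-based via `+1`. -/
def MeshOccursIn {k n : ℕ} (τ : Equiv.Perm (Fin k)) (R : Set (ℕ × ℕ))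
    (π : Equiv.Perm (Fin n)) : Prop :=
  ∃ x : Fin k → Fin n, StrictMono x ∧
    (∀ a b : Fin k, π (x a) < π (x b) ↔ τ a < τ b) ∧
    ∀ r ∈ R, ∀ z : Fin n,
      ¬ (posOf x r.1 < (z : ℕ) + 1 ∧ (z : ℕ) + 1 < posOf x (r.1 + 1) ∧
         valOf τ x π r.2 < (π z : ℕ) + 1 ∧ (π z : ℕ) + 1 < valOf τ x π (r.2 + 1))

/-- `π` avoids the mesh pattern `(τ, R)`. -/
def MeshAvoids {k n : ℕ} (τ : Equiv.Perm (Fin k)) (R : Set (ℕ × ℕ))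
    (π : Equiv.Perm (Fin n)) : Prop := ¬ MeshOccursIn τ R π

lemma posOf_mono' {k n : ℕ} {x : Fin k → Fin n} (hx : StrictMono x) :
    Monotone (posOf x) := by
  apply monotone_nat_of_le_succ
  intro m
  unfold posOf
  by_cases hm : 1 ≤ m ∧ m ≤ k
  · rw [dif_pos hm]
    by_cases hm1 : 1 ≤ m + 1 ∧ m + 1 ≤ k
    · rw [dif_pos hm1]
      have h := hx (show (⟨m - 1, by omega⟩ : Fin k) < ⟨m + 1 - 1, by omega⟩ from by
        simp only [Fin.mk_lt_mk]; omega)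
      simp only [Fin.lt_def] at h
      omega
    · rw [dif_neg hm1, if_neg (by omega)]
      have := (x ⟨m - 1, by omega⟩).isLt
      omega
  · rw [dif_neg hm]
    by_cases hm0 : m = 0
    · rw [if_pos hm0]
      exact Nat.zero_le _
    · rw [if_neg hm0, dif_neg (by omega), if_neg (by omega)]

lemma valOf_mono' {k n : ℕ} {τ : Equiv.Perm (Fin k)} {x : Fin k → Fin n}
    {π : Equiv.Perm (Fin n)}
    (ho : ∀ a b : Fin k, π (x a) < π (x b) ↔ τ a < τ b) :
    Monotone (valOf τ x π) := by
  apply monotone_nat_of_le_succ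
  intro m
  unfold valOf
  by_cases hm : 1 ≤ m ∧ m ≤ k
  · rw [dif_pos hm]
    by_cases hm1 : 1 ≤ m + 1 ∧ m + 1 ≤ k
    · rw [dif_pos hm1]
      have h : π (x (τ.symm ⟨m - 1, by omega⟩)) < π (x (τ.symm ⟨m + 1 - 1, by omega⟩)) := by
        rw [ho]
        simp only [Equiv.apply_symm_apply, Fin.mk_lt_mk]
        omega
      simp only [Fin.lt_def] at h
      omega
    · rw [dif_neg hm1, if_neg (by omega)]
      have := (π (x (τ.symm ⟨m - 1, by omega⟩))).isLt
      omega
  · rw [dif_neg hm]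
    by_cases hm0 : m = 0
    · rw [if_pos hm0]
      exact Nat.zero_le _
    · rw [if_neg hm0, dif_neg (by omega), if_neg (by omega)]

lemma posOf_val {k n : ℕ} (x : Fin k → Fin n) {i : ℕ} (hi1 : 1 ≤ i) (hik : i ≤ k)
    {i0 : Fin k} (hi0v : (i0 : ℕ) = i - 1) : posOf x i = (x i0 : ℕ) + 1 := by
  unfold posOf
  rw [dif_pos ⟨hi1, hik⟩]
  have : (⟨i - 1, by omega⟩ : Fin k) = i0 := Fin.ext hi0v.symm
  rw [this]

lemma valOf_val {k n : ℕ} (τ : Equiv.Perm (Fin k)) (x : Fin k → Fin n)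
    (π : Equiv.Perm (Fin n)) {j : ℕ} (hj1 : 1 ≤ j) (hjk : j ≤ k)
    {i0 : Fin k} (hjk' : j - 1 < k) (hsymm : τ.symm ⟨j - 1, hjk'⟩ = i0) :
    valOf τ x π j = (π (x i0) : ℕ) + 1 := by
  unfold valOf
  rw [dif_pos ⟨hj1, hjk⟩]
  rw [show (⟨j - 1, by omega⟩ : Fin k) = ⟨j - 1, hjk'⟩ from rfl, hsymm]

lemma posOf_congr {k n : ℕ} {x x' : Fin k → Fin n} {i0 : Fin k}
    (hx'ne : ∀ a : Fin k, a ≠ i0 → x' a = x a) {i : ℕ} (hi1 : 1 ≤ i)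
    (hi0v : (i0 : ℕ) = i - 1) : ∀ m : ℕ, m ≠ i → posOf x' m = posOf x m := by
  intro m hm
  unfold posOf
  by_cases h : 1 ≤ m ∧ m ≤ k
  · rw [dif_pos h, dif_pos h, hx'ne ⟨m - 1, by omega⟩ (by
      intro he
      have := congrArg Fin.val he
      simp only [hi0v] at this
      omega)]
  · rw [dif_neg h, dif_neg h]

lemma valOf_congr {k n : ℕ} {τ : Equiv.Perm (Fin k)} {x x' : Fin k → Fin n}
    {π : Equiv.Perm (Fin n)} {i0 : Fin k}
    (hx'ne : ∀ a : Fin k, a ≠ i0 → x' a = x a) {j : ℕ} (hj1 : 1 ≤ j)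
    (hjk' : j - 1 < k) (hsymm : τ.symm ⟨j - 1, hjk'⟩ = i0) :
    ∀ m : ℕ, m ≠ j → valOf τ x' π m = valOf τ x π m := by
  intro m hm
  unfold valOf
  by_cases h : 1 ≤ m ∧ m ≤ k
  · rw [dif_pos h, dif_pos h, hx'ne (τ.symm ⟨m - 1, by omega⟩) (by
      intro he
      rw [← hsymm] at he
      have := congrArg Fin.val (τ.symm.injective he)
      simp only at this
      omega)]
  · rw [dif_neg h, dif_neg h]

lemma shading_posx {k n : ℕ} {x : Fin k → Fin n} (hmono : StrictMono x)
    {i : ℕ} (hi1 : 1 ≤ i) (hik : i ≤ k) {i0 : Fin k} (hi0v : (i0 : ℕ) = i - 1)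
    {z : Fin n} (hz2 : (z : ℕ) + 1 < posOf x (i + 1)) :
    ∀ a : Fin k, a ≠ i0 → ((x a : ℕ) < x i0 ∨ (z : ℕ) < x a) := by
  intro a ha
  have hane : (a : ℕ) ≠ i - 1 := fun h => ha (Fin.ext (by rw [hi0v]; exact h))
  rcases Nat.lt_or_ge (a : ℕ) (i - 1) with hlt | hge
  · exact Or.inl (hmono (show a < i0 from Fin.lt_def.mpr (by omega)))
  · have hge' : i ≤ (a : ℕ) := by omega
    have hik2 : i < k := lt_of_le_of_lt hge' a.isLt
    have e : posOf x (i + 1) = (x ⟨i + 1 - 1, by omega⟩ : ℕ) + 1 :=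
      dif_pos ⟨by omega, by omega⟩
    rw [e] at hz2
    have hle : x ⟨i + 1 - 1, by omega⟩ ≤ x a :=
      hmono.monotone (Fin.le_def.mpr (by simp; omega))
    exact Or.inr (by have := Fin.le_def.mp hle; omega)

lemma shading_valx {k n : ℕ} {τ : Equiv.Perm (Fin k)} {x : Fin k → Fin n}
    {π : Equiv.Perm (Fin n)}
    (horder : ∀ a b : Fin k, π (x a) < π (x b) ↔ τ a < τ b)
    {j : ℕ} (hj1 : 1 ≤ j) (hjk : j ≤ k) {i0 : Fin k} (hjk' : j - 1 < k)
    (hτ' : τ i0 = ⟨j - 1, hjk'⟩)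
    {z : Fin n} (hz4 : (π z : ℕ) + 1 < valOf τ x π (j + 1)) :
    ∀ a : Fin k, a ≠ i0 → ((π (x a) : ℕ) < π (x i0) ∨ (π z : ℕ) < π (x a)) := by
  intro a ha
  have hne : (τ a : ℕ) ≠ j - 1 := by
    intro h
    exact ha (τ.injective (show τ a = τ i0 by rw [hτ']; exact Fin.ext h))
  rcases Nat.lt_or_ge (τ a : ℕ) (j - 1) with hlt | hge
  · left
    have : π (x a) < π (x i0) := (horder a i0).mpr (by rw [hτ']; exact Fin.lt_def.mpr hlt)
    exact Fin.lt_def.mp this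
  · have hge' : j ≤ (τ a : ℕ) := by omega
    have hjk2 : j < k := lt_of_le_of_lt hge' (τ a).isLt
    right
    have e : valOf τ x π (j + 1) = (π (x (τ.symm ⟨j + 1 - 1, by omega⟩)) : ℕ) + 1 :=
      dif_pos ⟨by omega, by omega⟩
    rw [e] at hz4
    have h6 : (π (x (τ.symm ⟨j + 1 - 1, by omega⟩)) : ℕ) ≤ π (x a) := by
      rcases eq_or_ne (τ.symm ⟨j + 1 - 1, by omega⟩) a with heq | hne2
      · rw [heq]
      · have hlt2 : τ (τ.symm ⟨j + 1 - 1, by omega⟩) < τ a := by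
          rw [Equiv.apply_symm_apply]
          refine Fin.lt_def.mpr ?_
          simp only
          have : (τ a : ℕ) ≠ j := by
            intro hh
            have hta : τ a = ⟨j + 1 - 1, by omega⟩ := Fin.ext (by simp; omega)
            exact hne2 (by rw [← hta, Equiv.symm_apply_apply])
          omega
        have := (horder _ _).mpr hlt2
        exact le_of_lt (Fin.lt_def.mp this)
    omega

lemma shading_mono {k n : ℕ} {x x' : Fin k → Fin n} {i0 : Fin k} {z : Fin n}
    (hmono : StrictMono x) (hx'i0 : x' i0 = z)
    (hx'ne : ∀ a : Fin k, a ≠ i0 → x' a = x a)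
    (hxz : (x i0 : ℕ) < z)
    (hposx : ∀ a : Fin k, a ≠ i0 → ((x a : ℕ) < x i0 ∨ (z : ℕ) < x a)) :
    StrictMono x' := by
  intro a b hab
  rcases eq_or_ne a i0 with rfl | ha
  · rw [hx'i0, hx'ne b (ne_of_gt hab)]
    rcases hposx b (ne_of_gt hab) with h | h
    · exact absurd h (by have := Fin.lt_def.mp (hmono hab); omega)
    · exact Fin.lt_def.mpr h
  · rcases eq_or_ne b i0 with rfl | hb
    · rw [hx'i0, hx'ne a ha]
      have h := Fin.lt_def.mp (hmono hab)
      exact Fin.lt_def.mpr (by omega)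
    · rw [hx'ne a ha, hx'ne b hb]
      exact hmono hab

lemma shading_order {k n : ℕ} {τ : Equiv.Perm (Fin k)} {x x' : Fin k → Fin n}
    {π : Equiv.Perm (Fin n)} {i0 : Fin k} {z : Fin n}
    (horder : ∀ a b : Fin k, π (x a) < π (x b) ↔ τ a < τ b)
    (hx'i0 : x' i0 = z) (hx'ne : ∀ a : Fin k, a ≠ i0 → x' a = x a)
    (hz3 : (π (x i0) : ℕ) < π z)
    (hvalx : ∀ a : Fin k, a ≠ i0 → ((π (x a) : ℕ) < π (x i0) ∨ (π z : ℕ) < π (x a))) :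
    ∀ a b : Fin k, π (x' a) < π (x' b) ↔ τ a < τ b := by
  intro a b
  rcases eq_or_ne a i0 with heq | ha
  · rcases eq_or_ne b i0 with heq2 | hb
    · rw [heq, heq2]
      simp [lt_irrefl]
    · rw [heq, hx'i0, hx'ne b hb]
      rcases hvalx b hb with h | h
      · constructor
        · intro hh
          have := Fin.lt_def.mp hh
          omega
        · intro hh
          exact absurd (Fin.lt_def.mp ((horder i0 b).mpr hh)) (by omega)
      · constructor
        · intro _
          exact (horder i0 b).mp (Fin.lt_def.mpr (by omega))
        · intro _
          exact Fin.lt_def.mpr h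
  · rcases eq_or_ne b i0 with heq | hb
    · rw [heq, hx'i0, hx'ne a ha]
      rcases hvalx a ha with h | h
      · constructor
        · intro _
          exact (horder a i0).mp (Fin.lt_def.mpr h)
        · intro _
          exact Fin.lt_def.mpr (by omega)
      · constructor
        · intro hh
          have := Fin.lt_def.mp hh
          omega
        · intro hh
          exact absurd (Fin.lt_def.mp ((horder a i0).mpr hh)) (by omega)
    · rw [hx'ne a ha, hx'ne b hb]
      exact horder a b

lemma shading_box {k n : ℕ} {τ : Equiv.Perm (Fin k)} {R : Set (ℕ × ℕ)}
    {x x' : Fin k → Fin n} {π : Equiv.Perm (Fin n)} {i0 : Fin k} {z : Fin n}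
    {i j : ℕ} (hi1 : 1 ≤ i) (hik : i ≤ k) (hj1 : 1 ≤ j) (hjk : j ≤ k)
    (h1 : (i - 1, j - 1) ∉ R)
    (h3 : ∀ l : ℕ, l ≠ i - 1 → l ≠ i → (l, j - 1) ∈ R → (l, j) ∈ R)
    (h4 : ∀ l : ℕ, l ≠ j - 1 → l ≠ j → (i - 1, l) ∈ R → (i, l) ∈ R)
    (hemp : ∀ r ∈ R, ∀ w : Fin n,
      ¬ (posOf x r.1 < (w : ℕ) + 1 ∧ (w : ℕ) + 1 < posOf x (r.1 + 1) ∧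
         valOf τ x π r.2 < (π w : ℕ) + 1 ∧ (π w : ℕ) + 1 < valOf τ x π (r.2 + 1)))
    (hPmono : Monotone (posOf x)) (hVmono : Monotone (valOf τ x π))
    (hPi : posOf x i = (x i0 : ℕ) + 1) (hVj : valOf τ x π j = (π (x i0) : ℕ) + 1)
    (hP'eq : ∀ m : ℕ, m ≠ i → posOf x' m = posOf x m)
    (hP'i : posOf x' i = (z : ℕ) + 1)
    (hV'eq : ∀ m : ℕ, m ≠ j → valOf τ x' π m = valOf τ x π m)
    (hV'j : valOf τ x' π j = (π z : ℕ) + 1)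
    (hz1 : (x i0 : ℕ) < z) (hz2 : (z : ℕ) + 1 < posOf x (i + 1))
    (hz3 : (π (x i0) : ℕ) < π z) (hz4 : (π z : ℕ) + 1 < valOf τ x π (j + 1))
    (hside : ((i, j - 1) ∉ R ∧ ∀ w : Fin n,
          (posOf x i < (w : ℕ) + 1 ∧ (w : ℕ) + 1 < posOf x (i + 1) ∧
           valOf τ x π j < (π w : ℕ) + 1 ∧ (π w : ℕ) + 1 < valOf τ x π (j + 1)) →
          (π w : ℕ) ≤ π z) ∨
        ((i - 1, j) ∉ R ∧ ∀ w : Fin n,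
          (posOf x i < (w : ℕ) + 1 ∧ (w : ℕ) + 1 < posOf x (i + 1) ∧
           valOf τ x π j < (π w : ℕ) + 1 ∧ (π w : ℕ) + 1 < valOf τ x π (j + 1)) →
          (w : ℕ) ≤ z)) :
    ∀ r ∈ R ∪ {(i, j)}, ∀ w : Fin n,
      ¬ (posOf x' r.1 < (w : ℕ) + 1 ∧ (w : ℕ) + 1 < posOf x' (r.1 + 1) ∧
         valOf τ x' π r.2 < (π w : ℕ) + 1 ∧ (π w : ℕ) + 1 < valOf τ x' π (r.2 + 1)) := by
  rintro ⟨a, b⟩ hr w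
  intro hw
  replace hw : posOf x' a < (w : ℕ) + 1 ∧ (w : ℕ) + 1 < posOf x' (a + 1) ∧
      valOf τ x' π b < (π w : ℕ) + 1 ∧ (π w : ℕ) + 1 < valOf τ x' π (b + 1) := hw
  obtain ⟨hw1, hw2, hw3, hw4⟩ := hw
  have hb' : ∀ a' b' : ℕ, (a', b') ∈ R →
      posOf x a' < (w : ℕ) + 1 → (w : ℕ) + 1 < posOf x (a' + 1) →
      valOf τ x π b' < (π w : ℕ) + 1 → (π w : ℕ) + 1 < valOf τ x π (b' + 1) → False :=
    fun a' b' hm p1 p2 v1 v2 => hemp (a', b') hm w ⟨p1, p2, v1, v2⟩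
  have hrR : (a ≠ i ∨ b ≠ j) → (a, b) ∈ R := by
    rcases hr with hr | hr
    · exact fun _ => hr
    · rw [Set.mem_singleton_iff, Prod.mk.injEq] at hr
      intro hne
      exfalso
      rcases hne with h | h
      · exact h hr.1
      · exact h hr.2
  have hPC : ((a ≠ i - 1 ∧ a ≠ i) ∧
        (posOf x a < (w : ℕ) + 1 ∧ (w : ℕ) + 1 < posOf x (a + 1)) ∧ (w : ℕ) ≠ (x i0 : ℕ))
      ∨ (a = i - 1 ∧ ((posOf x (i - 1) < (w : ℕ) + 1 ∧ (w : ℕ) + 1 < posOf x i) ∨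
          (w : ℕ) = (x i0 : ℕ) ∨
          ((posOf x i < (w : ℕ) + 1 ∧ (w : ℕ) + 1 < posOf x (i + 1)) ∧ (w : ℕ) < z)))
      ∨ (a = i ∧ (posOf x i < (w : ℕ) + 1 ∧ (w : ℕ) + 1 < posOf x (i + 1)) ∧
          (z : ℕ) < w) := by
    by_cases ha1 : a = i
    · right; right
      subst ha1
      rw [hP'i] at hw1
      rw [hP'eq (a + 1) (by omega)] at hw2
      exact ⟨rfl, ⟨by rw [hPi]; omega, hw2⟩, by omega⟩
    · by_cases ha2 : a + 1 = i
      · right; left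
        have haa : a = i - 1 := by omega
        rw [hP'eq a ha1] at hw1
        rw [ha2, hP'i] at hw2
        refine ⟨haa, ?_⟩
        rcases Nat.lt_trichotomy ((w : ℕ) + 1) (posOf x i) with h | h | h
        · rw [haa] at hw1
          exact Or.inl ⟨hw1, h⟩
        · rw [hPi] at h
          exact Or.inr (Or.inl (by omega))
        · exact Or.inr (Or.inr ⟨⟨h, by omega⟩, by omega⟩)
      · left
        rw [hP'eq a ha1] at hw1
        rw [hP'eq (a + 1) ha2] at hw2
        refine ⟨⟨by omega, ha1⟩, ⟨hw1, hw2⟩, ?_⟩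
        intro he
        have hni : ¬ i ≤ a := fun hh => absurd (hPmono hh) (by rw [hPi]; omega)
        have hnj : ¬ a + 1 ≤ i := fun hh => absurd (hPmono hh) (by rw [hPi]; omega)
        omega
  have hVC : ((b ≠ j - 1 ∧ b ≠ j) ∧
        (valOf τ x π b < (π w : ℕ) + 1 ∧ (π w : ℕ) + 1 < valOf τ x π (b + 1)) ∧
        (π w : ℕ) ≠ (π (x i0) : ℕ))
      ∨ (b = j - 1 ∧ ((valOf τ x π (j - 1) < (π w : ℕ) + 1 ∧ (π w : ℕ) + 1 < valOf τ x π j) ∨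
          (π w : ℕ) = (π (x i0) : ℕ) ∨
          ((valOf τ x π j < (π w : ℕ) + 1 ∧ (π w : ℕ) + 1 < valOf τ x π (j + 1)) ∧
            (π w : ℕ) < π z)))
      ∨ (b = j ∧ (valOf τ x π j < (π w : ℕ) + 1 ∧ (π w : ℕ) + 1 < valOf τ x π (j + 1)) ∧
          (π z : ℕ) < π w) := by
    by_cases hb1 : b = j
    · right; right
      subst hb1
      rw [hV'j] at hw3
      rw [hV'eq (b + 1) (by omega)] at hw4
      exact ⟨rfl, ⟨by rw [hVj]; omega, hw4⟩, by omega⟩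
    · by_cases hb2 : b + 1 = j
      · right; left
        have hbb : b = j - 1 := by omega
        rw [hV'eq b hb1] at hw3
        rw [hb2, hV'j] at hw4
        refine ⟨hbb, ?_⟩
        rcases Nat.lt_trichotomy ((π w : ℕ) + 1) (valOf τ x π j) with h | h | h
        · rw [hbb] at hw3
          exact Or.inl ⟨hw3, h⟩
        · rw [hVj] at h
          exact Or.inr (Or.inl (by omega))
        · exact Or.inr (Or.inr ⟨⟨h, by omega⟩, by omega⟩)
      · left
        rw [hV'eq b hb1] at hw3
        rw [hV'eq (b + 1) hb2] at hw4
        refine ⟨⟨by omega, hb1⟩, ⟨hw3, hw4⟩, ?_⟩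
        intro he
        have hni : ¬ j ≤ b := fun hh => absurd (hVmono hh) (by rw [hVj]; omega)
        have hnj : ¬ b + 1 ≤ j := fun hh => absurd (hVmono hh) (by rw [hVj]; omega)
        omega
  rcases hPC with ⟨⟨hna, hna'⟩, ⟨hp1, hp2⟩, hwne⟩ | ⟨haeq, hpc⟩ | ⟨haeq, ⟨hp1, hp2⟩, hzw⟩
  · -- generic column
    rcases hVC with ⟨⟨hnb, hnb'⟩, ⟨hv1, hv2⟩, hvne⟩ | ⟨hbeq, hvc⟩ | ⟨hbeq, ⟨hv1, hv2⟩, hzv⟩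
    · exact hb' a b (hrR (Or.inl hna')) hp1 hp2 hv1 hv2
    · have hm2 : (a, j - 1) ∈ R := by rw [← hbeq]; exact hrR (Or.inl hna')
      rcases hvc with ⟨hv1, hv2⟩ | hveq | ⟨⟨hv1, hv2⟩, hvz⟩
      · exact hb' a (j - 1) hm2 hp1 hp2 hv1
          (by rw [show j - 1 + 1 = j from by omega]; exact hv2)
      · exact hwne (congrArg Fin.val (π.injective (Fin.val_injective hveq)))
      · exact hb' a j (h3 a hna hna' hm2) hp1 hp2 hv1 hv2
    · exact hb' a j (by rw [← hbeq]; exact hrR (Or.inl hna')) hp1 hp2 hv1 hv2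
  · -- column i-1
    subst haeq
    have hane : i - 1 ≠ i := by omega
    rcases hVC with ⟨⟨hnb, hnb'⟩, ⟨hv1, hv2⟩, hvne⟩ | ⟨hbeq, hvc⟩ | ⟨hbeq, ⟨hv1, hv2⟩, hzv⟩
    · have hmem : (i - 1, b) ∈ R := hrR (Or.inl hane)
      rcases hpc with ⟨hp1, hp2⟩ | hweq | ⟨⟨hp1, hp2⟩, hwz⟩
      · exact hb' (i - 1) b hmem hp1
          (by rw [show i - 1 + 1 = i from by omega]; exact hp2) hv1 hv2
      · exact hvne (by rw [Fin.val_injective hweq])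
      · exact hb' i b (h4 b hnb hnb' hmem) hp1 hp2 hv1 hv2
    · exact h1 (by rw [← hbeq]; exact hrR (Or.inl hane))
    · have hmem : (i - 1, j) ∈ R := by rw [← hbeq]; exact hrR (Or.inl hane)
      rcases hside with ⟨hnc, htop⟩ | ⟨hnc, hright⟩
      · rcases hpc with ⟨hp1, hp2⟩ | hweq | ⟨⟨hp1, hp2⟩, hwz⟩
        · exact hb' (i - 1) j hmem hp1
            (by rw [show i - 1 + 1 = i from by omega]; exact hp2) hv1 hv2
        · have heq2 : (π w : ℕ) = (π (x i0) : ℕ) := by rw [Fin.val_injective hweq]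
          omega
        · exact absurd (htop w ⟨hp1, hp2, hv1, hv2⟩) (by omega)
      · exact hnc hmem
  · -- column i
    rcases hVC with ⟨⟨hnb, hnb'⟩, ⟨hv1, hv2⟩, hvne⟩ | ⟨hbeq, hvc⟩ | ⟨hbeq, ⟨hv1, hv2⟩, hzv⟩
    · exact hb' i b (by rw [← haeq]; exact hrR (Or.inr hnb')) hp1 hp2 hv1 hv2
    · have hmem : (i, j - 1) ∈ R := by
        rw [← haeq, ← hbeq]
        exact hrR (Or.inr (by omega))
      rcases hside with ⟨hnc, htop⟩ | ⟨hnc, hright⟩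
      · exact hnc hmem
      · rcases hvc with ⟨hv1, hv2⟩ | hveq | ⟨⟨hv1, hv2⟩, hvz⟩
        · exact hb' i (j - 1) hmem hp1 hp2 hv1
            (by rw [show j - 1 + 1 = j from by omega]; exact hv2)
        · have := congrArg Fin.val (π.injective (Fin.val_injective hveq))
          omega
        · exact absurd (hright w ⟨hp1, hp2, hv1, hv2⟩) (by omega)
    · rcases hside with ⟨_, htop⟩ | ⟨_, hright⟩
      · exact absurd (htop w ⟨hp1, hp2, hv1, hv2⟩) (by omega)
      · exact absurd (hright w ⟨hp1, hp2, hv1, hv2⟩) (by omega)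

/-- **Shading Lemma.** Under the four conditions on the mesh `R`
around the pattern point `(i, j)` (1-based, `τ(i) = j`), the patterns `(τ, R)`
and `(τ, R ∪ {(i,j)})` are coincident. -/
theorem shading_lemma {k : ℕ} (τ : Equiv.Perm (Fin k)) (R : Set (ℕ × ℕ))
    (hR : ∀ r ∈ R, r.1 ≤ k ∧ r.2 ≤ k)
    (i j : ℕ) (hi1 : 1 ≤ i) (hik : i ≤ k) (hj1 : 1 ≤ j) (hjk : j ≤ k)
    (hτ : τ ⟨i - 1, by omega⟩ = ⟨j - 1, by omega⟩)
    (hbox : (i, j) ∉ R)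
    (h1 : (i - 1, j - 1) ∉ R)
    (h2 : ¬((i, j - 1) ∈ R ∧ (i - 1, j) ∈ R))
    (h3 : ∀ l : ℕ, l ≠ i - 1 → l ≠ i → (l, j - 1) ∈ R → (l, j) ∈ R)
    (h4 : ∀ l : ℕ, l ≠ j - 1 → l ≠ j → (i - 1, l) ∈ R → (i, l) ∈ R) :
    ∀ (n : ℕ) (π : Equiv.Perm (Fin n)),
      MeshAvoids τ R π ↔ MeshAvoids τ (R ∪ {(i, j)}) π := by
  intro n π
  constructor
  · intro h hocc
    obtain ⟨x, ha, hb, hc⟩ := hocc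
    exact h ⟨x, ha, hb, fun r hr => hc r (Or.inl hr)⟩
  · intro h hocc
    apply h
    clear h
    obtain ⟨x, hmono, horder, hemp⟩ := hocc
    classical
    have hik' : i - 1 < k := by omega
    have hjk' : j - 1 < k := by omega
    obtain ⟨i0, hi0⟩ : ∃ t : Fin k, t = ⟨i - 1, hik'⟩ := ⟨⟨i - 1, hik'⟩, rfl⟩
    have hi0v : (i0 : ℕ) = i - 1 := by rw [hi0]
    have hτ' : τ i0 = ⟨j - 1, hjk'⟩ := by rw [hi0]; exact hτ
    have hsymm : τ.symm ⟨j - 1, hjk'⟩ = i0 := τ.symm_apply_eq.mpr hτ'.symm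
    have hPi : posOf x i = (x i0 : ℕ) + 1 := posOf_val x hi1 hik hi0v
    have hVj : valOf τ x π j = (π (x i0) : ℕ) + 1 := valOf_val τ x π hj1 hjk hjk' hsymm
    have hPmono : Monotone (posOf x) := posOf_mono' hmono
    have hVmono : Monotone (valOf τ x π) := valOf_mono' horder
    by_cases hB : ∃ w : Fin n,
        posOf x i < (w : ℕ) + 1 ∧ (w : ℕ) + 1 < posOf x (i + 1) ∧
        valOf τ x π j < (π w : ℕ) + 1 ∧ (π w : ℕ) + 1 < valOf τ x π (j + 1)
    case neg =>
      refine ⟨x, hmono, horder, ?_⟩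
      rintro r (hr | hr) w
      · exact hemp r hr w
      · rw [Set.mem_singleton_iff] at hr
        subst hr
        intro hw
        exact hB ⟨w, hw.1, hw.2.1, hw.2.2.1, hw.2.2.2⟩
    case pos =>
      have hchoice : ∃ z : Fin n,
          (posOf x i < (z : ℕ) + 1 ∧ (z : ℕ) + 1 < posOf x (i + 1) ∧
           valOf τ x π j < (π z : ℕ) + 1 ∧ (π z : ℕ) + 1 < valOf τ x π (j + 1)) ∧
          (((i, j - 1) ∉ R ∧ ∀ w : Fin n,
              (posOf x i < (w : ℕ) + 1 ∧ (w : ℕ) + 1 < posOf x (i + 1) ∧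
               valOf τ x π j < (π w : ℕ) + 1 ∧ (π w : ℕ) + 1 < valOf τ x π (j + 1)) →
              (π w : ℕ) ≤ π z) ∨
           ((i - 1, j) ∉ R ∧ ∀ w : Fin n,
              (posOf x i < (w : ℕ) + 1 ∧ (w : ℕ) + 1 < posOf x (i + 1) ∧
               valOf τ x π j < (π w : ℕ) + 1 ∧ (π w : ℕ) + 1 < valOf τ x π (j + 1)) →
              (w : ℕ) ≤ z)) := by
        obtain ⟨w0, hw0⟩ := hB
        by_cases hc : (i, j - 1) ∈ R
        · have hc2 : (i - 1, j) ∉ R := fun hc2 => h2 ⟨hc, hc2⟩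
          obtain ⟨z, hz, hmax⟩ := Finset.exists_max_image
            (Finset.univ.filter (fun w : Fin n =>
              posOf x i < (w : ℕ) + 1 ∧ (w : ℕ) + 1 < posOf x (i + 1) ∧
              valOf τ x π j < (π w : ℕ) + 1 ∧ (π w : ℕ) + 1 < valOf τ x π (j + 1)))
            (fun w => (w : ℕ)) ⟨w0, by simp [hw0.1, hw0.2.1, hw0.2.2.1, hw0.2.2.2]; exact ⟨by omega, by omega⟩⟩
          simp only [Finset.mem_filter, Finset.mem_univ, true_and] at hz hmax
          exact ⟨z, hz, Or.inr ⟨hc2, fun w hw => hmax w hw⟩⟩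
        · obtain ⟨z, hz, hmax⟩ := Finset.exists_max_image
            (Finset.univ.filter (fun w : Fin n =>
              posOf x i < (w : ℕ) + 1 ∧ (w : ℕ) + 1 < posOf x (i + 1) ∧
              valOf τ x π j < (π w : ℕ) + 1 ∧ (π w : ℕ) + 1 < valOf τ x π (j + 1)))
            (fun w => (π w : ℕ)) ⟨w0, by simp [hw0.1, hw0.2.1, hw0.2.2.1, hw0.2.2.2]; exact ⟨by omega, by omega⟩⟩
          simp only [Finset.mem_filter, Finset.mem_univ, true_and] at hz hmax
          exact ⟨z, hz, Or.inl ⟨hc, fun w hw => hmax w hw⟩⟩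
      obtain ⟨z, ⟨hz1, hz2, hz3, hz4⟩, hside⟩ := hchoice
      have hz1n : (x i0 : ℕ) < z := by rw [hPi] at hz1; omega
      have hz3n : (π (x i0) : ℕ) < π z := by rw [hVj] at hz3; omega
      obtain ⟨x', hx'i0, hx'ne⟩ :
          ∃ x' : Fin k → Fin n, x' i0 = z ∧ ∀ a : Fin k, a ≠ i0 → x' a = x a :=
        ⟨Function.update x i0 z, Function.update_self _ _ _,
          fun a ha => Function.update_of_ne ha _ _⟩
      have hposx := shading_posx hmono hi1 hik hi0v hz2
      have hvalx := shading_valx horder hj1 hjk hjk' hτ' hz4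
      have hmono' : StrictMono x' := shading_mono hmono hx'i0 hx'ne hz1n hposx
      have horder' : ∀ a b : Fin k, π (x' a) < π (x' b) ↔ τ a < τ b :=
        shading_order horder hx'i0 hx'ne hz3n hvalx
      have hP'eq : ∀ m : ℕ, m ≠ i → posOf x' m = posOf x m := posOf_congr hx'ne hi1 hi0v
      have hP'i : posOf x' i = (z : ℕ) + 1 := by
        rw [posOf_val x' hi1 hik hi0v, hx'i0]
      have hV'eq : ∀ m : ℕ, m ≠ j → valOf τ x' π m = valOf τ x π m :=
        valOf_congr hx'ne hj1 hjk' hsymm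
      have hV'j : valOf τ x' π j = (π z : ℕ) + 1 := by
        rw [valOf_val τ x' π hj1 hjk hjk' hsymm, hx'i0]
      exact ⟨x', hmono', horder',
        shading_box hi1 hik hj1 hjk h1 h3 h4 hemp hPmono hVmono hPi hVj
          hP'eq hP'i hV'eq hV'j hz1n hz2 hz3n hz4 hside⟩
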